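/- Let F be a field, n ≥ 1, d ≥ 1, let f ∈ F_{Ā,C̄}[X] be a polynomial of degree ≤ d, and let 1 ≤ d' ≤ d. Let Φ(f) ∈ A'_d(R) be the evaluation of f at (Z_1,…,Z_n) under the ∘ product. Then the (1, d'+1, 1) entry of Φ(f) equals Σ_m c_m · Π_{t=1}^{d'} z_{σ_m(t), t, l^m_t}, where the sum runs over all monomials m of degree exactly d' and c_m denotes the coefficient of m in f (i.e., this entry equals the image φ(f_{d'}) of the homogeneous degree-d' component of f under the substitution m ↦ Π_{t=1}^{d'} z_{σ_m(t), t, l^m_t}). -/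

import Mathlib

noncomputable section

open scoped BigOperators

namespace NAPIT

/-- The list of (leaf label, leaf level) pairs of a nonassociative monomial (element of the
free magma), in left-to-right order, where the root of the monomial is at level `s`. -/
def leafData {n : ℕ} : FreeMagma (Fin n) → ℕ → List (Fin n × ℕ)
  | FreeMagma.of i, s => [(i, s)]
  | FreeMagma.mul x y, s => leafData x (s + 1) ++ leafData y (s + 1)

/-- The degree (number of leaves) of a nonassociative monomial. -/
def degM {n : ℕ} : FreeMagma (Fin n) → ℕ
  | FreeMagma.of _ => 1
  | FreeMagma.mul x y => degM x + degM y

/-- The depth of a nonassociative monomial (root at level 1; the depth is the maximal level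
of a leaf). -/
def depthM {n : ℕ} : FreeMagma (Fin n) → ℕ
  | FreeMagma.of _ => 1
  | FreeMagma.mul x y => max (depthM x) (depthM y) + 1

/-- Evaluation of a nonassociative monomial at `b : Fin n → A`, using `mul` as the product on
`A`; this is the unique magma homomorphism `FreeMagma (Fin n) → (A, mul)` with `x_i ↦ b i`. -/
def evalWith {n : ℕ} {A : Type*} (mul : A → A → A) (b : Fin n → A) : FreeMagma (Fin n) → A
  | FreeMagma.of i => b i
  | FreeMagma.mul x y => mul (evalWith mul b x) (evalWith mul b y)

/-- The multiset of all variants `m_ε` of a monomial `m`, where `ε` ranges over all choices of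
a Boolean for each internal node of `m`, and `m_ε` is obtained from `m` by swapping the two
children at exactly those internal nodes where `ε` is true (counted with multiplicity). -/
def variants {n : ℕ} : FreeMagma (Fin n) → Multiset (FreeMagma (Fin n))
  | FreeMagma.of i => {FreeMagma.of i}
  | FreeMagma.mul x y =>
      (variants x).bind fun x' => (variants y).bind fun y' =>
        {FreeMagma.mul x' y', FreeMagma.mul y' x'}

/-- The underlying module of the algebra `A'_d(R)`: arrays `x[i,j,k]` with
`i, j ∈ Fin (d+1)`, `k ∈ Fin d` (zero-based; the paper's indices are shifted by one). -/
def Arr (d : ℕ) (R : Type*) : Type _ := Fin (d + 1) → Fin (d + 1) → Fin d → R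

namespace Arr

variable {d : ℕ} {R : Type*}

instance instAddCommGroup [AddCommGroup R] : AddCommGroup (Arr d R) :=
  inferInstanceAs (AddCommGroup (Fin (d + 1) → Fin (d + 1) → Fin d → R))

instance instModule {S : Type*} [Semiring S] [AddCommGroup R] [Module S R] :
    Module S (Arr d R) :=
  inferInstanceAs (Module S (Fin (d + 1) → Fin (d + 1) → Fin d → R))

/-- The bilinear product `∘` of `A'_d(R)`:
`(x ∘ y)[i,j,k] = ∑_{l} x[i,l,k+1] * y[l,j,k+1]` if `k+1` is a legal third index, else `0`. -/
def aprod [CommRing R] (x y : Arr d R) : Arr d R := fun i j k =>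
  if h : (k : ℕ) + 1 < d then
    ∑ l : Fin (d + 1), x i l ⟨(k : ℕ) + 1, h⟩ * y l j ⟨(k : ℕ) + 1, h⟩
  else 0

instance instMul [CommRing R] : Mul (Arr d R) := ⟨aprod⟩

end Arr

/-- The algebra `C'_d(R)`: same underlying module as `A'_d(R)`, with the anticommutator
product `a ⊙ b = a ∘ b + b ∘ a`. -/
def CArr (d : ℕ) (R : Type*) : Type _ := Arr d R

namespace CArr

variable {d : ℕ} {R : Type*}

/-- The identity map `A'_d(R) → C'_d(R)` of underlying modules. -/
def ofArr (x : Arr d R) : CArr d R := x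

/-- The identity map `C'_d(R) → A'_d(R)` of underlying modules. -/
def toArr (x : CArr d R) : Arr d R := x

instance instAddCommGroup [AddCommGroup R] : AddCommGroup (CArr d R) :=
  inferInstanceAs (AddCommGroup (Arr d R))

instance instModule {S : Type*} [Semiring S] [AddCommGroup R] [Module S R] :
    Module S (CArr d R) :=
  inferInstanceAs (Module S (Arr d R))

instance instMul [CommRing R] : Mul (CArr d R) :=
  ⟨fun a b => ofArr (toArr a * toArr b + toArr b * toArr a)⟩

end CArr

/-- The element `Z_i ∈ A'_d(R)`, `R = MvPolynomial (Fin n × Fin d × Fin d) F`, whose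
`(j, j+1, k)` entry is the indeterminate `z_{i,j,k}` and whose other entries vanish. -/
def Z (F : Type*) [CommRing F] (n d : ℕ) (i : Fin n) :
    Arr d (MvPolynomial (Fin n × Fin d × Fin d) F) := fun j j' k =>
  if h : (j : ℕ) < d ∧ (j' : ℕ) = (j : ℕ) + 1 then
    MvPolynomial.X (i, ⟨(j : ℕ), h.1⟩, k)
  else 0

/-- The element `Z_i` regarded as an element of `C'_d(R)`. -/
def ZC (F : Type*) [CommRing F] (n d : ℕ) (i : Fin n) :
    CArr d (MvPolynomial (Fin n × Fin d × Fin d) F) := CArr.ofArr (Z F n d i)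

/-- The monomial `∏_{t=1}^{d'} z_{σ_m(t), (t-1) + k1, (l^m_t - 1) + k2}` associated to a
nonassociative monomial `m` of degree `d'` and offsets `k1, k2` (all indices zero-based; the
paper's 1-based offsets are `k1 + 1`, `k2 + 1`).  Indices which would fall out of range are
discarded (this never happens in the intended range of parameters). -/
def monProd (F : Type*) [CommRing F] {n : ℕ} (d : ℕ) (k1 k2 : ℕ) (m : FreeMagma (Fin n)) :
    MvPolynomial (Fin n × Fin d × Fin d) F :=
  (((List.range (leafData m 1).length).zip (leafData m 1)).map fun p =>
    if h : p.1 + k1 < d ∧ p.2.2 - 1 + k2 < d then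
      MvPolynomial.X (p.2.1, ⟨p.1 + k1, h.1⟩, ⟨p.2.2 - 1 + k2, h.2⟩)
    else 0).prod

/-- `ψ(m) = ∑_ε ∏_{t=1}^{d'} z_{σ_{m_ε}(t), t, l^{m_ε}_t}` (1-based), the sum running over all
choices `ε` of a Boolean for each internal node of `m`. -/
def psi (F : Type*) [CommRing F] {n : ℕ} (d : ℕ) (m : FreeMagma (Fin n)) :
    MvPolynomial (Fin n × Fin d × Fin d) F :=
  ((variants m).map fun m' => monProd F d 0 0 m').sum

/-- The coefficient function of an element of the free nonunital nonassociative algebra. -/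
def coeffOf {F : Type*} [Semiring F] {n : ℕ}
    (f : FreeNonUnitalNonAssocAlgebra F (Fin n)) : FreeMagma (Fin n) →₀ F := f.coeff

/-- Evaluation of an element of the free nonunital nonassociative algebra on `x_1, …, x_n` at
the tuple `b`, with `mul` as the product of the target: the linear extension of
`m ↦ evalWith mul b m`, i.e. the unique nonunital `F`-algebra homomorphism sending
`x_i ↦ b i` into `(A, mul)`. -/
def evalNAWith {F : Type*} [Semiring F] {n : ℕ} {A : Type*}
    [AddCommMonoid A] [Module F A] (mul : A → A → A) (b : Fin n → A)
    (f : FreeNonUnitalNonAssocAlgebra F (Fin n)) : A :=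
  Finsupp.sum (coeffOf f) fun m c => c • evalWith mul b m

/-- Evaluation of an element of the free nonunital nonassociative algebra at a tuple `b` of
elements of a (not necessarily unital/associative) algebra `A`: the unique nonunital
`F`-algebra homomorphism sending `x_i ↦ b i`. -/
def evalNA {F : Type*} [Semiring F] {n : ℕ} {A : Type*}
    [AddCommMonoid A] [Mul A] [Module F A] (b : Fin n → A)
    (f : FreeNonUnitalNonAssocAlgebra F (Fin n)) : A :=
  evalNAWith (· * ·) b f

/-- Evaluation of an element of the unitization of the free nonunital nonassociative algebra
at a tuple `b` of elements of the unitization of `A`: the unique unital `F`-algebra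
homomorphism sending `x_i ↦ b i` (and the adjoined unit to the unit). -/
def evalUnit {F : Type*} [CommSemiring F] {n : ℕ} {A : Type*}
    [AddCommMonoid A] [Mul A] [Module F A] (b : Fin n → Unitization F A)
    (f : Unitization F (FreeNonUnitalNonAssocAlgebra F (Fin n))) : Unitization F A :=
  Unitization.inl f.fst + evalNA b f.snd

/-- The commutativity congruence on the free magma: the smallest equivalence relation with
`m₁ * m₂ ≈ m₂ * m₁` and compatible with the product. -/
inductive CommEq {n : ℕ} : FreeMagma (Fin n) → FreeMagma (Fin n) → Prop
  | refl (m : FreeMagma (Fin n)) : CommEq m m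
  | symm {a b : FreeMagma (Fin n)} : CommEq a b → CommEq b a
  | trans {a b c : FreeMagma (Fin n)} : CommEq a b → CommEq b c → CommEq a c
  | comm (a b : FreeMagma (Fin n)) : CommEq (a * b) (b * a)
  | mul_congr {a a' b b' : FreeMagma (Fin n)} :
      CommEq a a' → CommEq b b' → CommEq (a * b) (a' * b')

/-- The basis monomial `m` of the free nonunital nonassociative algebra. -/
def single1 (F : Type*) [Semiring F] {n : ℕ} (m : FreeMagma (Fin n)) :
    FreeNonUnitalNonAssocAlgebra F (Fin n) :=
  MonoidAlgebra.ofCoeff (Finsupp.single m 1 : FreeMagma (Fin n) →₀ F)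

/-- `I_comm`: the `F`-linear span of `{m − m' : m ≈ m'}` inside the free nonunital
nonassociative algebra. -/
def Icomm (F : Type*) [Field F] (n : ℕ) :
    Submodule F (FreeNonUnitalNonAssocAlgebra F (Fin n)) :=
  Submodule.span F
    {x | ∃ m m' : FreeMagma (Fin n), CommEq m m' ∧ x = single1 F m - single1 F m'}

section Aux

variable {F : Type*} [CommRing F] {n d : ℕ}

lemma degM_mul (x y : FreeMagma (Fin n)) : degM (x * y) = degM x + degM y := rfl

lemma depthM_mul (x y : FreeMagma (Fin n)) :
    depthM (x * y) = max (depthM x) (depthM y) + 1 := rfl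

lemma leafData_mul (x y : FreeMagma (Fin n)) (s : ℕ) :
    leafData (x * y) s = leafData x (s + 1) ++ leafData y (s + 1) := rfl

/-- Auxiliary product over a list of leaf data with offsets. -/
def LP (F : Type*) [CommRing F] (n d : ℕ) (a c : ℕ) :
    List (Fin n × ℕ) → MvPolynomial (Fin n × Fin d × Fin d) F
  | [] => 1
  | p :: L =>
      (if h : a < d ∧ p.2 - 1 + c < d then
        MvPolynomial.X (p.1, ⟨a, h.1⟩, ⟨p.2 - 1 + c, h.2⟩) else 0) * LP F n d (a + 1) c L

lemma LP_append (c : ℕ) :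
    ∀ (L1 L2 : List (Fin n × ℕ)) (a : ℕ),
      LP F n d a c (L1 ++ L2) = LP F n d a c L1 * LP F n d (a + L1.length) c L2
  | [], L2, a => by simp [LP]
  | p :: L1, L2, a => by
      have h : a + (p :: L1).length = a + 1 + L1.length := by simp; omega
      simp only [List.cons_append, LP, mul_assoc, h]
      rw [LP_append c L1 L2 (a + 1)]

lemma leafData_succ (m : FreeMagma (Fin n)) :
    ∀ s, leafData m (s + 1) = (leafData m s).map fun p => (p.1, p.2 + 1) := by
  induction m with
  | ih1 i => intro s; simp [leafData]
  | ih2 x y ihx ihy => intro s; simp [leafData_mul, ihx, ihy]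

lemma leafData_length (m : FreeMagma (Fin n)) : ∀ s, (leafData m s).length = degM m := by
  induction m with
  | ih1 i => intro s; simp [leafData, degM]
  | ih2 x y ihx ihy => intro s; simp [leafData_mul, degM_mul, ihx, ihy]

lemma leafData_level_le (m : FreeMagma (Fin n)) :
    ∀ s, ∀ p ∈ leafData m s, s ≤ p.2 := by
  induction m with
  | ih1 i =>
      intro s p hp
      simp only [leafData, List.mem_singleton] at hp
      subst hp
      simp
  | ih2 x y ihx ihy =>
      intro s p hp
      simp only [leafData_mul, List.mem_append] at hp
      rcases hp with hp | hp
      · have := ihx (s + 1) p hp; omega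
      · have := ihy (s + 1) p hp; omega

lemma LP_shift (c : ℕ) :
    ∀ (L : List (Fin n × ℕ)), (∀ p ∈ L, 1 ≤ p.2) → ∀ a,
      LP F n d a c (L.map fun p => (p.1, p.2 + 1)) = LP F n d a (c + 1) L
  | [], _, a => by simp [LP]
  | p :: L, h, a => by
      have h1 : 1 ≤ p.2 := h p (by simp)
      have key : p.2 + 1 - 1 + c = p.2 - 1 + (c + 1) := by omega
      simp only [List.map_cons, LP, key,
        LP_shift c L (fun q hq => h q (by simp [hq])) (a + 1)]

lemma LP_eq_enumFrom (c : ℕ) :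
    ∀ (L : List (Fin n × ℕ)) (a : ℕ),
      LP F n d a c L = (((List.range' a L.length).zip L).map fun p =>
        if h : p.1 < d ∧ p.2.2 - 1 + c < d then
          MvPolynomial.X ((p.2.1 : Fin n), (⟨p.1, h.1⟩ : Fin d), (⟨p.2.2 - 1 + c, h.2⟩ : Fin d))
        else 0).prod
  | [], a => by simp [LP]
  | p :: L, a => by
      simp only [List.length_cons, List.range'_succ, List.zip_cons_cons, LP, List.map_cons, List.prod_cons,
        LP_eq_enumFrom c L (a + 1)]

lemma monProd_eq_LP (m : FreeMagma (Fin n)) :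
    monProd F d 0 0 m = LP F n d 0 0 (leafData m 1) := by
  rw [monProd, LP_eq_enumFrom, List.range_eq_range']
  simp

lemma one_le_depthM (m : FreeMagma (Fin n)) : 1 ≤ depthM m := by
  induction m with
  | ih1 i => simp [depthM]
  | ih2 x y ihx ihy => rw [depthM_mul]; omega

lemma one_le_degM (m : FreeMagma (Fin n)) : 1 ≤ degM m := by
  induction m with
  | ih1 i => simp [degM]
  | ih2 x y ihx ihy => simp [degM_mul]; omega

lemma depthM_le_degM (m : FreeMagma (Fin n)) : depthM m ≤ degM m := by
  induction m with
  | ih1 i => simp [depthM, degM]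
  | ih2 x y ihx ihy =>
      have hx := one_le_degM x
      have hy := one_le_degM y
      simp only [depthM_mul, degM_mul]
      omega

lemma eval_entry_zero (m : FreeMagma (Fin n)) :
    ∀ (j j' : Fin (d + 1)) (k : Fin d), (j' : ℕ) ≠ (j : ℕ) + degM m →
      evalWith (· * ·) (Z F n d) m j j' k = 0 := by
  induction m with
  | ih1 i =>
      intro j j' k hne
      simp only [evalWith, Z, degM] at *
      rw [dif_neg]
      rintro ⟨-, h2⟩; exact hne (by omega)
  | ih2 x y ihx ihy =>
      intro j j' k hne
      show Arr.aprod _ _ j j' k = 0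
      rw [Arr.aprod]
      split
      · apply Finset.sum_eq_zero
        intro l _
        by_cases hl : (l : ℕ) = (j : ℕ) + degM x
        · rw [ihy l j' _ (by rw [degM_mul] at hne; omega), mul_zero]
        · rw [ihx j l _ hl, zero_mul]
      · rfl

lemma eval_entry (m : FreeMagma (Fin n)) :
    ∀ (j j' : Fin (d + 1)) (k : Fin d), (j' : ℕ) = (j : ℕ) + degM m →
      (k : ℕ) + depthM m ≤ d →
      evalWith (· * ·) (Z F n d) m j j' k = LP F n d j k (leafData m 1) := by
  induction m with
  | ih1 i =>
      intro j j' k hj hk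
      simp only [degM] at hj
      simp only [evalWith, Z, leafData, LP]
      have hjd : (j : ℕ) < d := by omega
      rw [dif_pos ⟨hjd, hj⟩, dif_pos ⟨hjd, by simpa using k.2⟩, mul_one]
      congr 1
      simp
  | ih2 x y ihx ihy =>
      intro j j' k hj hk
      rw [degM_mul] at hj
      rw [depthM_mul] at hk
      have hmx := le_max_left (depthM x) (depthM y)
      have hmy := le_max_right (depthM x) (depthM y)
      have h1x := one_le_depthM x
      have hkx : (k : ℕ) + 1 + depthM x ≤ d := by omega
      have hky : (k : ℕ) + 1 + depthM y ≤ d := by omega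
      have hk1 : (k : ℕ) + 1 < d := by omega
      have hjx : (j : ℕ) + degM x < d + 1 := by
        have h1 := one_le_degM y
        have h2 := j'.isLt
        omega
      show Arr.aprod _ _ j j' k = _
      rw [Arr.aprod, dif_pos hk1]
      rw [Finset.sum_eq_single (⟨(j : ℕ) + degM x, hjx⟩ : Fin (d + 1))]
      · rw [ihx j ⟨(j : ℕ) + degM x, hjx⟩ ⟨(k : ℕ) + 1, hk1⟩ rfl hkx,
          ihy ⟨(j : ℕ) + degM x, hjx⟩ j' ⟨(k : ℕ) + 1, hk1⟩
            (show (j' : ℕ) = (j : ℕ) + degM x + degM y by omega) hky]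
        simp only [leafData_mul, LP_append, leafData_length]
        rw [leafData_succ x 1, leafData_succ y 1,
          LP_shift _ _ (leafData_level_le x 1), LP_shift _ _ (leafData_level_le y 1)]
      · intro l _ hl
        rw [eval_entry_zero x j l _ (by
          intro h; apply hl; apply Fin.ext; simpa using h), zero_mul]
      · intro h; exact absurd (Finset.mem_univ _) h

lemma arr_sum_apply {R : Type*} [CommRing R] {ι : Type*} (s : Finset ι)
    (f : ι → Arr d R) (i j : Fin (d + 1)) (k : Fin d) :
    (∑ a ∈ s, f a) i j k = ∑ a ∈ s, f a i j k := by
  classical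
  induction s using Finset.induction with
  | empty => rfl
  | @insert _ _ hx ih =>
      rw [Finset.sum_insert hx, Finset.sum_insert hx, ← ih]
      rfl

end Aux

/-- consequence of Claim 3.3.  Let `F` be a field, `n, d ≥ 1`, let `f` be an
element of the free nonunital nonassociative noncommutative algebra `F_{Ā,C̄}[X]` of degree
`≤ d`, and let `1 ≤ d' ≤ d`.  Then the `(1, d'+1, 1)` entry (1-based; zero-based `(0, d', 0)`)
of the evaluation `Φ(f)` of `f` at `(Z_1, …, Z_n)` under the `∘` product equals
`∑_m c_m ∏_{t=1}^{d'} z_{σ_m(t), t, l^m_t}`, the sum running over all monomials `m` of degree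
exactly `d'`, where `c_m` is the coefficient of `m` in `f`; i.e. it is the image `φ(f_{d'})`
of the degree-`d'` homogeneous component of `f`. -/
theorem entry_of_eval_free_at_Z {F : Type*} [Field F] (n d : ℕ) (hn : 1 ≤ n) (hd : 1 ≤ d)
    (f : FreeNonUnitalNonAssocAlgebra F (Fin n))
    (hdeg : ∀ m ∈ (coeffOf f).support, degM m ≤ d)
    (d' : ℕ) (hd'1 : 1 ≤ d') (hd'2 : d' ≤ d) :
    evalNA (Z F n d) f ⟨0, by omega⟩ ⟨d', by omega⟩ ⟨0, by omega⟩
      = ∑ m ∈ (coeffOf f).support.filter (fun m => degM m = d'),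
          MvPolynomial.C (coeffOf f m) * monProd F d 0 0 m := by
  classical
  have key : evalNA (Z F n d) f ⟨0, by omega⟩ ⟨d', by omega⟩ ⟨0, by omega⟩
      = ∑ m ∈ (coeffOf f).support,
          coeffOf f m • (evalWith (· * ·) (Z F n d) m ⟨0, by omega⟩ ⟨d', by omega⟩
            ⟨0, by omega⟩) := by
    rw [evalNA, evalNAWith, Finsupp.sum, arr_sum_apply]
    exact Finset.sum_congr rfl fun _ _ => rfl
  rw [key, ← Finset.sum_filter_add_sum_filter_not ((coeffOf f).support)
    (fun m => degM m = d')]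
  have h2 : ∑ m ∈ (coeffOf f).support.filter (fun m => ¬ degM m = d'),
      coeffOf f m • (evalWith (· * ·) (Z F n d) m ⟨0, by omega⟩ ⟨d', by omega⟩
        ⟨0, by omega⟩) = 0 := by
    apply Finset.sum_eq_zero
    intro m hm
    simp only [Finset.mem_filter] at hm
    rw [eval_entry_zero m _ _ _ (by simpa using fun h => hm.2 h.symm)]
    simp
  rw [h2, add_zero]
  apply Finset.sum_congr rfl
  intro m hm
  simp only [Finset.mem_filter] at hm
  have hdep := depthM_le_degM m
  rw [eval_entry m _ _ _ (by simp [hm.2]) (by simp; omega)]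
  rw [monProd_eq_LP, MvPolynomial.smul_eq_C_mul]



end NAPIT
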